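/- Let H = {2^{2i} : i ∈ ω}, K = {2^{2i+1} : i ∈ ω}, and P = { Σ_{j ∈ K} ε_j 2^{-j} : ε ∈ {0,1}^K } ⊆ ℝ. Define Γ : P^H → ℝ by Γ(⟨z_n⟩_{n ∈ H}) = Σ_{n ∈ H} z_n 2^{-n}. Then Γ is injective: if z_n, w_n ∈ P for all n ∈ H and Σ_{n ∈ H} z_n 2^{-n} = Σ_{n ∈ H} w_n 2^{-n}, then z_n = w_n for every n ∈ H. -/

import Mathlib

/-- `H = {2^(2i) : i ∈ ω} = {1, 4, 16, …}`. -/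
def Hset : Set ℕ := {n | ∃ i : ℕ, n = 2 ^ (2 * i)}

/-- `K = {2^(2i+1) : i ∈ ω} = {2, 8, 32, …}`. -/
def Kset : Set ℕ := {n | ∃ i : ℕ, n = 2 ^ (2 * i + 1)}

/-- `P = { Σ_{j ∈ K} ε_j 2^{-j} : ε ∈ {0,1}^K } ⊆ ℝ`. -/
noncomputable def Pset : Set ℝ :=
  {x | ∃ ε : Kset → Bool, x = ∑' j : Kset, (if ε j then (2 : ℝ) ^ (-(j.1 : ℤ)) else 0)}

open Function

lemma pow2_lt_iff {a b : ℕ} : (2:ℕ)^a < 2^b ↔ a < b := Nat.pow_lt_pow_iff_right one_lt_two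

lemma pow2_inj {a b : ℕ} (h : (2:ℕ)^a = 2^b) : a = b :=
  Nat.pow_right_injective (le_refl 2) h

lemma aux1 {a b c d : ℕ} (hab : a < b) (hcd : c < d) (h : 2^a + 2^b = 2^c + 2^d) :
    a = c ∧ b = d := by
  have pa : 0 < (2:ℕ)^a := Nat.two_pow_pos a
  have pc : 0 < (2:ℕ)^c := Nat.two_pow_pos c
  have h1 : (2:ℕ)^a < 2^b := pow2_lt_iff.mpr hab
  have h2 : (2:ℕ)^c < 2^d := pow2_lt_iff.mpr hcd
  have hbd : b = d := by
    have e1 : (2:ℕ)^(d+1) = 2^d + 2^d := by ring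
    have e2 : (2:ℕ)^(b+1) = 2^b + 2^b := by ring
    have hb1 : (2:ℕ)^b < 2^(d+1) := by omega
    have hd1 : (2:ℕ)^d < 2^(b+1) := by omega
    have := pow2_lt_iff.mp hb1
    have := pow2_lt_iff.mp hd1
    omega
  subst hbd
  refine ⟨pow2_inj ?_, rfl⟩
  omega

lemma enc_inj {i k i' k' : ℕ}
    (h : 2^(2*i) + 2^(2*k+1) = 2^(2*i') + 2^(2*k'+1)) : i = i' ∧ k = k' := by
  rcases Nat.lt_or_ge (2*i) (2*k+1) with h1 | h1 <;>
    rcases Nat.lt_or_ge (2*i') (2*k'+1) with h2 | h2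
  · obtain ⟨e1, e2⟩ := aux1 h1 h2 h
    omega
  · have h2' : 2*k'+1 < 2*i' := by omega
    rw [Nat.add_comm (2^(2*i')) _] at h
    obtain ⟨e1, e2⟩ := aux1 h1 h2' h
    omega
  · have h1' : 2*k+1 < 2*i := by omega
    rw [Nat.add_comm (2^(2*i)) _] at h
    obtain ⟨e1, e2⟩ := aux1 h1' h2 h
    omega
  · have h1' : 2*k+1 < 2*i := by omega
    have h2' : 2*k'+1 < 2*i' := by omega
    rw [Nat.add_comm (2^(2*i)) _, Nat.add_comm (2^(2*i')) _] at h
    obtain ⟨e1, e2⟩ := aux1 h1' h2' h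
    omega

lemma pow2_mod2 {m : ℕ} (hm : 0 < m) : (2:ℕ)^m % 2 = 0 := by
  obtain ⟨m, rfl⟩ := Nat.exists_eq_add_of_lt hm
  rw [pow_succ]
  omega

lemma enc_spaced {i k i' k' : ℕ} :
    2^(2*i') + 2^(2*k'+1) ≠ 2^(2*i) + 2^(2*k+1) + 1 := by
  intro h
  have pk : (2:ℕ)^(2*k+1) % 2 = 0 := pow2_mod2 (by omega)
  have pk' : (2:ℕ)^(2*k'+1) % 2 = 0 := pow2_mod2 (by omega)
  rcases Nat.eq_zero_or_pos i with rfl | hi <;> rcases Nat.eq_zero_or_pos i' with rfl | hi'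
  · -- 1 + 2^(2k'+1) = 1 + 2^(2k+1) + 1
    simp only [Nat.mul_zero, pow_zero] at h
    omega
  · -- 2^(2i') + 2^(2k'+1) = 2 + 2^(2k+1)
    simp only [Nat.mul_zero, pow_zero] at h
    have h' : 2^(2*i') + 2^(2*k'+1) = 2^1 + 2^(2*k+1) := by norm_num; omega
    rcases Nat.eq_zero_or_pos k with rfl | hk
    · -- RHS = 2 + 2 = 4, LHS ≥ 4 + 2
      have b1 : (4:ℕ) ≤ 2^(2*i') := by
        calc (4:ℕ) = 2^2 := by norm_num
        _ ≤ 2^(2*i') := Nat.pow_le_pow_right (by norm_num) (by omega)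
      have b2 : (2:ℕ) ≤ 2^(2*k'+1) := by
        calc (2:ℕ) = 2^1 := by norm_num
        _ ≤ 2^(2*k'+1) := Nat.pow_le_pow_right (by norm_num) (by omega)
      norm_num at h'
      omega
    · rcases Nat.lt_or_ge (2*i') (2*k'+1) with h2 | h2
      · obtain ⟨e1, e2⟩ := aux1 h2 (show 1 < 2*k+1 by omega) h'
        omega
      · have h2' : 2*k'+1 < 2*i' := by omega
        rw [Nat.add_comm (2^(2*i')) _] at h'
        obtain ⟨e1, e2⟩ := aux1 h2' (show 1 < 2*k+1 by omega) h'
        omega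
  · -- 1 + 2^(2k'+1) = 2^(2i) + 2^(2k+1) + 1, so 2^(2k'+1) = 2^(2i) + 2^(2k+1)
    simp only [Nat.mul_zero, pow_zero] at h
    have h' : (2:ℕ)^(2*k'+1) = 2^(2*i) + 2^(2*k+1) := by omega
    have pa : 0 < (2:ℕ)^(2*i) := Nat.two_pow_pos _
    have pb : 0 < (2:ℕ)^(2*k+1) := Nat.two_pow_pos _
    rcases Nat.lt_or_ge (2*i) (2*k+1) with h2 | h2
    · have l1 : (2:ℕ)^(2*k+1) < 2^(2*k'+1) := by omega
      have l2 : (2:ℕ)^(2*k'+1) < 2^(2*k+1+1) := by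
        have e2 : (2:ℕ)^(2*k+1+1) = 2^(2*k+1) + 2^(2*k+1) := by ring
        have := pow2_lt_iff.mpr h2
        omega
      have := pow2_lt_iff.mp l1
      have := pow2_lt_iff.mp l2
      omega
    · have h2' : 2*k+1 < 2*i := by omega
      have l1 : (2:ℕ)^(2*i) < 2^(2*k'+1) := by omega
      have l2 : (2:ℕ)^(2*k'+1) < 2^(2*i+1) := by
        have e2 : (2:ℕ)^(2*i+1) = 2^(2*i) + 2^(2*i) := by ring
        have := pow2_lt_iff.mpr h2'
        omega
      have := pow2_lt_iff.mp l1
      have := pow2_lt_iff.mp l2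
      omega
  · -- both positive: parity contradiction
    have pi : (2:ℕ)^(2*i) % 2 = 0 := pow2_mod2 (by omega)
    have pi' : (2:ℕ)^(2*i') % 2 = 0 := pow2_mod2 (by omega)
    omega

lemma summable_ind (c : ℕ → Bool) :
    Summable (fun t => if c t then ((1/2:ℝ))^t else 0) := by
  apply Summable.of_nonneg_of_le (fun t => ?_) (fun t => ?_)
    (summable_geometric_of_lt_one (by norm_num) (by norm_num : (1/2:ℝ) < 1))
  · split <;> positivity
  · split
    · exact le_rfl
    · positivity

lemma core_aux (c d : ℕ → Bool) (S : Set ℕ) (hS : ∀ t ∈ S, t+1 ∉ S)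
    (hc : ∀ t, c t = true → t ∈ S) (hd : ∀ t, d t = true → t ∈ S)
    (t₀ : ℕ) (h1 : c t₀ = true) (h2 : d t₀ = false)
    (hlt : ∀ t < t₀, c t = d t) :
    (∑' t, (if d t then ((1/2:ℝ))^t else 0)) < ∑' t, (if c t then ((1/2:ℝ))^t else 0) := by
  have hF := summable_ind c
  have hG := summable_ind d
  set F := fun t => if c t then ((1/2:ℝ))^t else 0 with hFdef
  set G := fun t => if d t then ((1/2:ℝ))^t else 0 with hGdef
  rw [← hF.sum_add_tsum_nat_add t₀, ← hG.sum_add_tsum_nat_add t₀]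
  have hpre : ∑ i ∈ Finset.range t₀, G i = ∑ i ∈ Finset.range t₀, F i := by
    refine Finset.sum_congr rfl fun i hi => ?_
    have := hlt i (Finset.mem_range.mp hi)
    simp [hFdef, hGdef, this]
  rw [hpre]
  apply add_lt_add_right
  have hFt : Summable fun i => F (i + t₀) := (summable_nat_add_iff (f := F) t₀).2 hF
  have hGt : Summable fun i => G (i + t₀) := (summable_nat_add_iff (f := G) t₀).2 hG
  have lower : (1/2:ℝ)^t₀ ≤ ∑' i, F (i + t₀) := by
    have h0 : F (0 + t₀) = (1/2:ℝ)^t₀ := by simp [hFdef, h1]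
    calc (1/2:ℝ)^t₀ = F (0 + t₀) := h0.symm
    _ ≤ ∑' i, F (i + t₀) := hFt.le_tsum 0 (fun j _ => by
        simp only [hFdef]; split <;> positivity)
  have upper : ∑' i, G (i + t₀) ≤ (1/2:ℝ)^(t₀+1) := by
    have hGt2 : Summable fun i => G (i + 2 + t₀) := (summable_nat_add_iff (f := fun i => G (i + t₀)) 2).2 hGt
    have hshift : ∑' i, G (i + t₀) = ∑' i, G (i + 2 + t₀) := by
      rw [← hGt.sum_add_tsum_nat_add 2]
      have e0 : G (0 + t₀) = 0 := by simp [hGdef, h2]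
      have e1 : G (1 + t₀) = 0 := by
        have hd1 : d (t₀ + 1) = false := by
          cases hb : d (t₀ + 1)
          · rfl
          · exact absurd (hd _ hb) (hS t₀ (hc t₀ h1))
        simp [hGdef, Nat.add_comm 1 t₀, hd1]
      rw [Finset.sum_range_succ, Finset.sum_range_succ, Finset.sum_range_zero, e0, e1]
      ring
    rw [hshift]
    have hb : ∑' i : ℕ, ((1/2:ℝ))^(i + 2 + t₀) = (1/2:ℝ)^(t₀+1) := by
      have : ∀ i : ℕ, ((1/2:ℝ))^(i + 2 + t₀) = ((1/2:ℝ))^i * ((1/2:ℝ))^(2+t₀) := by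
        intro i; rw [← pow_add]; ring_nf
      rw [tsum_congr this, tsum_mul_right,
        tsum_geometric_of_lt_one (by norm_num) (by norm_num : (1/2:ℝ) < 1)]
      rw [show 2+t₀ = (t₀+1)+1 by omega, pow_succ]
      ring
    rw [← hb]
    refine Summable.tsum_le_tsum (fun i => ?_) hGt2 ?_
    · simp only [hGdef]
      split
      · exact le_rfl
      · positivity
    · refine ((summable_geometric_of_lt_one (by norm_num)
        (by norm_num : (1/2:ℝ) < 1)).mul_right ((1/2:ℝ)^(2+t₀))).congr (fun i => ?_)
      rw [← pow_add]
      congr 1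
      omega
  have final : (1/2:ℝ)^(t₀+1) < (1/2:ℝ)^t₀ := by
    have hp : (0:ℝ) < (1/2:ℝ)^t₀ := by positivity
    rw [pow_succ]; nlinarith
  linarith

lemma core (c d : ℕ → Bool) (S : Set ℕ) (hS : ∀ t ∈ S, t+1 ∉ S)
    (hc : ∀ t, c t = true → t ∈ S) (hd : ∀ t, d t = true → t ∈ S)
    (h : (∑' t, (if c t then ((1/2:ℝ))^t else 0)) = ∑' t, (if d t then ((1/2:ℝ))^t else 0)) :
    c = d := by
  by_contra hne
  have hex : ∃ t, c t ≠ d t := Function.ne_iff.mp hne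
  have h0 : c (Nat.find hex) ≠ d (Nat.find hex) := Nat.find_spec hex
  have hmin : ∀ t < Nat.find hex, c t = d t := fun t ht =>
    not_ne_iff.mp (Nat.find_min hex ht)
  cases hc0 : c (Nat.find hex) <;> cases hd0 : d (Nat.find hex)
  · rw [hc0, hd0] at h0; exact h0 rfl
  · have := core_aux d c S hS hd hc (Nat.find hex) hd0 hc0
      (fun t ht => (hmin t ht).symm)
    rw [h] at this; exact lt_irrefl _ this
  · have := core_aux c d S hS hc hd (Nat.find hex) hc0 hd0 hmin
    rw [h] at this; exact lt_irrefl _ this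
  · rw [hc0, hd0] at h0; exact h0 rfl

lemma hpow (m : ℕ) : (2:ℝ)^(-(m:ℤ)) = (1/2:ℝ)^m := by
  rw [zpow_neg, zpow_natCast, one_div, inv_pow]

open Classical in
noncomputable def indC {ι : Type*} (p : ι → ℕ) (e : ι → Bool) : ℕ → Bool :=
  fun t => if ∃ x, p x = t ∧ e x = true then true else false

lemma indC_apply {ι : Type*} {p : ι → ℕ} (hp : Injective p) (e : ι → Bool) (x : ι) :
    indC p e (p x) = e x := by
  unfold indC
  split
  · next hex =>
    obtain ⟨y, hy, he⟩ := hex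
    rw [hp hy] at he
    exact he.symm
  · next hex =>
    cases hx : e x
    · rfl
    · exact absurd ⟨x, rfl, hx⟩ hex

lemma indC_support {ι : Type*} {p : ι → ℕ} {e : ι → Bool} {t : ℕ}
    (h : indC p e t = true) : ∃ x, p x = t := by
  unfold indC at h
  split at h
  · next hex => obtain ⟨y, hy, _⟩ := hex; exact ⟨y, hy⟩
  · simp at h

lemma tsum_indC {ι : Type*} {p : ι → ℕ} (hp : Injective p) (e : ι → Bool) :
    ∑' x : ι, (if e x then ((1/2:ℝ))^(p x) else 0)
      = ∑' t : ℕ, (if indC p e t then ((1/2:ℝ))^t else 0) := by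
  have hsupp : Function.support (fun t => if indC p e t then ((1/2:ℝ))^t else 0)
      ⊆ Set.range p := by
    intro t ht
    simp only [Function.mem_support] at ht
    cases hi : indC p e t
    · rw [hi] at ht
      simp at ht
    · exact indC_support hi
  have := hp.tsum_eq (f := fun t => if indC p e t then ((1/2:ℝ))^t else 0) hsupp
  rw [← this]
  exact tsum_congr fun x => by simp only [indC_apply hp]
noncomputable def pmap : Hset × Kset → ℕ := fun x => x.1.1 + x.2.1

lemma pmap_inj : Injective pmap := by
  rintro ⟨⟨n, hn⟩, ⟨j, hj⟩⟩ ⟨⟨n', hn'⟩, ⟨j', hj'⟩⟩ hxy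
  obtain ⟨i, rfl⟩ := hn
  obtain ⟨k, rfl⟩ := hj
  obtain ⟨i', rfl⟩ := hn'
  obtain ⟨k', rfl⟩ := hj'
  obtain ⟨e1, e2⟩ := enc_inj (hxy : 2^(2*i) + 2^(2*k+1) = 2^(2*i') + 2^(2*k'+1))
  subst e1; subst e2
  rfl

lemma pmap_spaced : ∀ x y : Hset × Kset, pmap y ≠ pmap x + 1 := by
  rintro ⟨⟨n, hn⟩, ⟨j, hj⟩⟩ ⟨⟨n', hn'⟩, ⟨j', hj'⟩⟩ hxy
  obtain ⟨i, rfl⟩ := hn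
  obtain ⟨k, rfl⟩ := hj
  obtain ⟨i', rfl⟩ := hn'
  obtain ⟨k', rfl⟩ := hj'
  exact enc_spaced (hxy : 2^(2*i') + 2^(2*k'+1) = 2^(2*i) + 2^(2*k+1) + 1)

lemma summable_half_H : Summable (fun n : Hset => ((1/2:ℝ))^(n.1 : ℕ)) :=
  (summable_geometric_of_lt_one (by norm_num) (by norm_num : (1/2:ℝ) < 1)).subtype Hset

lemma summable_half_K : Summable (fun j : Kset => ((1/2:ℝ))^(j.1 : ℕ)) :=
  (summable_geometric_of_lt_one (by norm_num) (by norm_num : (1/2:ℝ) < 1)).subtype Kset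

set_option maxHeartbeats 1000000 in
lemma summable_pmap (e : Hset × Kset → Bool) :
    Summable (fun x : Hset × Kset => if e x then ((1/2:ℝ))^(pmap x) else 0) := by
  have hprod : Summable (fun q : Hset × Kset => ((1/2:ℝ))^(q.1.1 : ℕ) * ((1/2:ℝ))^(q.2.1 : ℕ)) :=
    summable_half_H.mul_of_nonneg summable_half_K
      (fun q => pow_nonneg (by norm_num) _) (fun q => pow_nonneg (by norm_num) _)
  refine Summable.of_nonneg_of_le (fun x => ?_) (fun x => ?_) hprod
  · split <;> positivity
  · have : ((1/2:ℝ))^(pmap x) = ((1/2:ℝ))^(x.1.1 : ℕ) * ((1/2:ℝ))^(x.2.1 : ℕ) := by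
      rw [← pow_add]; rfl
    split
    · rw [this]
    · positivity

lemma key_eq (e : Hset → Kset → Bool) :
    ∑' n : Hset, (∑' j : Kset, (if e n j then (2:ℝ)^(-(j.1:ℤ)) else 0)) * (2:ℝ)^(-(n.1:ℤ))
      = ∑' t : ℕ, (if indC pmap (fun x => e x.1 x.2) t then ((1/2:ℝ))^t else 0) := by
  have hsum := summable_pmap (fun x => e x.1 x.2)
  have step1 : ∀ n : Hset,
      (∑' j : Kset, (if e n j then (2:ℝ)^(-(j.1:ℤ)) else 0)) * (2:ℝ)^(-(n.1:ℤ))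
        = ∑' j : Kset, (if e n j then ((1/2:ℝ))^(pmap (n, j)) else 0) := by
    intro n
    rw [← tsum_mul_right]
    refine tsum_congr fun j => ?_
    rw [ite_mul, zero_mul, hpow, hpow, ← pow_add]
    have : (j.1 : ℕ) + (n.1 : ℕ) = pmap (n, j) := by
      simp only [pmap]; omega
    rw [this]
  calc ∑' n : Hset, (∑' j : Kset, (if e n j then (2:ℝ)^(-(j.1:ℤ)) else 0)) * (2:ℝ)^(-(n.1:ℤ))
      = ∑' n : Hset, ∑' j : Kset, (if e n j then ((1/2:ℝ))^(pmap (n, j)) else 0) :=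
        tsum_congr step1
    _ = ∑' x : Hset × Kset, (if e x.1 x.2 then ((1/2:ℝ))^(pmap x) else 0) :=
        hsum.tsum_prod.symm
    _ = ∑' t : ℕ, (if indC pmap (fun x => e x.1 x.2) t then ((1/2:ℝ))^t else 0) :=
        tsum_indC pmap_inj _

/-- `Γ` is injective: if `z_n, w_n ∈ P` for all `n ∈ H` and
`Σ_{n ∈ H} z_n 2^{-n} = Σ_{n ∈ H} w_n 2^{-n}`, then `z_n = w_n` for all `n ∈ H`. -/
theorem Gamma_injective (z w : Hset → ℝ)
    (hz : ∀ n, z n ∈ Pset) (hw : ∀ n, w n ∈ Pset)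
    (h : ∑' n : Hset, z n * (2 : ℝ) ^ (-(n.1 : ℤ)) =
         ∑' n : Hset, w n * (2 : ℝ) ^ (-(n.1 : ℤ))) :
    ∀ n, z n = w n := by
  choose ε hε using hz
  choose δ hδ using hw
  have hL : ∑' n : Hset, z n * (2 : ℝ) ^ (-(n.1 : ℤ))
      = ∑' t : ℕ, (if indC pmap (fun x => ε x.1 x.2) t then ((1/2:ℝ))^t else 0) := by
    rw [← key_eq ε]
    exact tsum_congr fun n => by rw [hε n]
  have hM : ∑' n : Hset, w n * (2 : ℝ) ^ (-(n.1 : ℤ))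
      = ∑' t : ℕ, (if indC pmap (fun x => δ x.1 x.2) t then ((1/2:ℝ))^t else 0) := by
    rw [← key_eq δ]
    exact tsum_congr fun n => by rw [hδ n]
  have hS : ∀ t ∈ Set.range pmap, t + 1 ∉ Set.range pmap := by
    rintro t ⟨x, rfl⟩ ⟨y, hy⟩
    exact pmap_spaced x y hy
  have hcd := core (indC pmap (fun x => ε x.1 x.2)) (indC pmap (fun x => δ x.1 x.2))
    (Set.range pmap) hS
    (fun t ht => indC_support ht) (fun t ht => indC_support ht)
    (by rw [← hL, ← hM]; exact h)
  intro n
  rw [hε n, hδ n]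
  refine tsum_congr fun j => ?_
  have h1 := indC_apply pmap_inj (fun x => ε x.1 x.2) (n, j)
  have h2 := indC_apply pmap_inj (fun x => δ x.1 x.2) (n, j)
  rw [hcd] at h1
  rw [h1] at h2
  rw [h2]
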